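/- Let A be a complex unital Banach algebra, let e, f, h ∈ A be invertible positive elements, let a ∈ A be such that a^†_{e,h} exists, and suppose a = b c where b x = 0 implies x = 0 and c A = A (so that b^†_{e,f} and c^†_{f,h} exist). Then the following are equivalent: (i) a is weighted EP with weights e and h; (ii) there exists an invertible u ∈ A such that c = u b^†_{e,f} and b = c^†_{f,h} u; (iii) there exist u₁, u₂ ∈ A with u₁ A = A and u₂ x = 0 implying x = 0, such that c = u₂ b^†_{e,f} and b = c^†_{f,h} u₁. -/

import Mathlib

/-!
Common definitions: hermitian and positive elements of a complex unital Banach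
algebra, hermitian elements with respect to the equivalent norm induced by an
invertible positive element (weight), and the weighted Moore–Penrose inverse,
both for Banach algebra elements and for bounded linear operators between
Banach spaces.
-/

noncomputable section

/-- An element `a` of a complex unital Banach algebra is hermitian if
`‖exp(i t a)‖ = 1` for all real `t`. -/
def IsHermitianEl {A : Type*} [NormedRing A] [NormedAlgebra ℂ A] (a : A) : Prop :=
  ∀ t : ℝ, ‖NormedSpace.exp ((Complex.I * (t : ℂ)) • a)‖ = 1

/-- An element of a complex unital Banach algebra is positive if it is hermitian
and its spectrum is contained in `[0, ∞)`. -/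
def IsPositiveEl {A : Type*} [NormedRing A] [NormedAlgebra ℂ A] (a : A) : Prop :=
  IsHermitianEl a ∧ spectrum ℂ a ⊆ Complex.ofReal '' Set.Ici (0 : ℝ)

/-- `a` is hermitian in `A^u`, i.e. hermitian for the equivalent norm
`‖x‖_u = ‖u^{1/2} x u^{-1/2}‖`, where `u^{1/2}` is the (unique) invertible
positive square root of the invertible positive weight `u`. -/
def IsHermitianWt {A : Type*} [NormedRing A] [NormedAlgebra ℂ A] (u a : A) : Prop :=
  ∃ s : Aˣ, IsPositiveEl (s : A) ∧ ((s : A)) ^ 2 = u ∧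
    ∀ t : ℝ, ‖(s : A) * NormedSpace.exp ((Complex.I * (t : ℂ)) • a) * ((s⁻¹ : Aˣ) : A)‖ = 1

/-- `b` is the weighted Moore–Penrose inverse of `a` with weights `e` and `f`. -/
def IsWMPI {A : Type*} [NormedRing A] [NormedAlgebra ℂ A] (e f a b : A) : Prop :=
  a * b * a = a ∧ b * a * b = b ∧ IsHermitianWt e (a * b) ∧ IsHermitianWt f (b * a)

/-- `a` is weighted EP with weights `e` and `f`. -/
def IsWEP {A : Type*} [NormedRing A] [NormedAlgebra ℂ A] (e f a : A) : Prop :=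
  ∃ b : A, IsWMPI e f a b ∧ a * b = b * a

/-- `S ∈ L(Y,X)` is the weighted Moore–Penrose inverse of `T ∈ L(X,Y)` with
weights `E ∈ L(Y)` and `F ∈ L(X)`. -/
def IsWMPIop {X Y : Type*} [NormedAddCommGroup X] [NormedSpace ℂ X]
    [NormedAddCommGroup Y] [NormedSpace ℂ Y]
    (E : Y →L[ℂ] Y) (F : X →L[ℂ] X) (T : X →L[ℂ] Y) (S : Y →L[ℂ] X) : Prop :=
  (T.comp S).comp T = T ∧ (S.comp T).comp S = S ∧
    IsHermitianWt E (T.comp S) ∧ IsHermitianWt F (S.comp T)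

/-- `T ∈ L(X)` is weighted EP with weights `E` and `F`. -/
def IsWEPop {X : Type*} [NormedAddCommGroup X] [NormedSpace ℂ X]
    (E F T : X →L[ℂ] X) : Prop :=
  ∃ S : X →L[ℂ] X, IsWMPIop E F T S ∧ T.comp S = S.comp T


section Aux

set_option maxHeartbeats 1000000

section CommSpec
variable {B : Type*} [NormedRing B] [NormedAlgebra ℂ B] [CompleteSpace B]

omit [NormedAlgebra ℂ B] [CompleteSpace B] in
lemma isClosed_centralizer' (T : Set B) : IsClosed (Set.centralizer T) := by
  have : Set.centralizer T = ⋂ g ∈ T, {z : B | g * z = z * g} := by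
    ext z
    simp [Set.mem_centralizer_iff, Set.mem_iInter]
  rw [this]
  exact isClosed_biInter fun g _ =>
    isClosed_eq (continuous_const.mul continuous_id) (continuous_id.mul continuous_const)

lemma isUnit_add_of_commute_spectrum {P Q : B} (hc : P * Q = Q * P)
    (H : ∀ x ∈ spectrum ℂ P, ∀ y ∈ spectrum ℂ Q, x + y ≠ 0) : IsUnit (P + Q) := by
  set C : Set B := Set.centralizer {P, Q} with hCdef
  set S : Subalgebra ℂ B := Subalgebra.centralizer ℂ C with hSdef
  have hPC : P ∈ C := by
    intro g hg
    rcases hg with h | h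
    · rw [h]
    · rw [Set.mem_singleton_iff] at h; rw [h]; exact hc.symm
  have hQC : Q ∈ C := by
    intro g hg
    rcases hg with h | h
    · rw [h]; exact hc
    · rw [Set.mem_singleton_iff] at h; rw [h]
  have hPS : P ∈ S := fun g hg => (hg P (Or.inl rfl)).symm
  have hQS : Q ∈ S := fun g hg => (hg Q (Or.inr rfl)).symm
  have hSsubC : (S : Set B) ⊆ C := by
    intro y hy g hg
    rcases hg with h | h
    · rw [h]; exact hy P hPC
    · rw [Set.mem_singleton_iff] at h; rw [h]; exact hy Q hQC
  haveI : CompleteSpace S := by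
    have hcl : IsClosed (S : Set B) := by
      have : (S : Set B) = Set.centralizer C := Subalgebra.coe_centralizer ℂ C
      rw [this]; exact isClosed_centralizer' C
    exact hcl.completeSpace_coe
  letI : NormedCommRing S :=
    { (inferInstance : NormedRing S) with
      mul_comm := by
        rintro ⟨x, hx⟩ ⟨y, hy⟩
        ext
        exact (hx y (hSsubC hy)).symm }
  have hspec : ∀ x : S, spectrum ℂ x ⊆ spectrum ℂ (x : B) := by
    intro x z hz
    by_contra hzB
    rw [spectrum.mem_iff] at hz hzB
    apply hz
    rw [not_not] at hzB
    obtain ⟨v, hv⟩ := hzB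
    have hvalS : algebraMap ℂ B z - (x : B) ∈ S := S.sub_mem (S.algebraMap_mem z) x.2
    have hvinvS : ((v⁻¹ : Bˣ) : B) ∈ S := by
      intro g hg
      have hgv : Commute g (v : B) := by
        unfold Commute SemiconjBy
        rw [hv]
        exact hvalS g hg
      exact hgv.units_inv_right.eq
    refine ⟨⟨algebraMap ℂ S z - x, ⟨((v⁻¹ : Bˣ) : B), hvinvS⟩, ?_, ?_⟩, rfl⟩
    · ext
      push_cast
      rw [← hv]
      exact v.mul_inv
    · ext
      push_cast
      rw [← hv]
      exact v.inv_mul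
  have hxS : IsUnit ((⟨P, hPS⟩ + ⟨Q, hQS⟩ : S)) := by
    by_contra hnx
    obtain ⟨χ, hχ⟩ := WeakDual.CharacterSpace.exists_apply_eq_zero hnx
    rw [map_add] at hχ
    have h1 : χ ⟨P, hPS⟩ ∈ spectrum ℂ P := hspec _ (AlgHom.apply_mem_spectrum χ _)
    have h2 : χ ⟨Q, hQS⟩ ∈ spectrum ℂ Q := hspec _ (AlgHom.apply_mem_spectrum χ _)
    exact H _ h1 _ h2 hχ
  have := hxS.map S.val
  simpa using this

end CommSpec

section BanachLemmas
variable {A : Type*} [NormedRing A] [NormedAlgebra ℂ A] [CompleteSpace A]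

omit [CompleteSpace A] in
lemma one_sub_smul_mul' (z w : ℂ) (n : A) (hn : n * n = 0) :
    (1 - z • n) * (1 - w • n) = 1 - (z + w) • n := by
  rw [sub_mul, one_mul, mul_sub, mul_one, smul_mul_smul_comm, hn, smul_zero, sub_zero,
    add_smul, sub_sub, add_comm (w • n) (z • n)]

omit [NormedAlgebra ℂ A] [CompleteSpace A] in
lemma conj_mul_conj' (s : Aˣ) (x y : A) :
    ((s : A) * x * ((s⁻¹ : Aˣ) : A)) * ((s : A) * y * ((s⁻¹ : Aˣ) : A))
      = (s : A) * (x * y) * ((s⁻¹ : Aˣ) : A) := by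
  simp only [mul_assoc, Units.inv_mul_cancel_left]

lemma nilp_eq_zero' (s : Aˣ) (n : A) (hn : n * n = 0)
    (h : ‖(s : A) * (1 - (2:ℂ) • n) * ((s⁻¹ : Aˣ) : A)‖ ≤ 1) : n = 0 := by
  set Y : A := (s : A) * (1 - (2:ℂ) • n) * ((s⁻¹ : Aˣ) : A) with hY
  have hYk : ∀ k : ℕ, Y ^ (k+1) = (s : A) * (1 - ((2:ℂ) * (k+1)) • n) * ((s⁻¹ : Aˣ) : A) := by
    intro k
    induction k with
    | zero => rw [hY]; norm_num
    | succ k ih =>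
      rw [pow_succ, ih, hY, conj_mul_conj', one_sub_smul_mul' _ _ _ hn]
      have hco : ((2:ℂ) * (k+1)) + 2 = (2:ℂ) * (((k:ℕ)+1 : ℕ) + 1) := by push_cast; ring
      rw [hco]
  by_contra hne
  have hnpos : 0 < ‖n‖ := norm_pos_iff.mpr hne
  set C : ℝ := ‖(1:A)‖ + ‖((s⁻¹ : Aˣ) : A)‖ * ‖(s : A)‖ with hC
  have hbound : ∀ k : ℕ, (2 * ((k:ℝ)+1)) * ‖n‖ ≤ C := by
    intro k
    have h1 : ‖Y ^ (k+1)‖ ≤ 1 := by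
      calc ‖Y ^ (k+1)‖ ≤ ‖Y‖ ^ (k+1) := norm_pow_le' Y (Nat.succ_pos k)
        _ ≤ 1 := pow_le_one₀ (norm_nonneg Y) h
    have h2 : ((s⁻¹ : Aˣ) : A) * (Y ^ (k+1)) * (s : A) = 1 - ((2:ℂ) * (k+1)) • n := by
      rw [hYk k]
      simp only [mul_assoc, Units.inv_mul_cancel_left, Units.inv_mul, mul_one]
    have h3 : ((2:ℂ) * (k+1)) • n = 1 - ((s⁻¹ : Aˣ) : A) * (Y ^ (k+1)) * (s : A) := by
      rw [h2]; abel
    have h4 : ‖((2:ℂ) * ((k:ℂ)+1)) • n‖ ≤ C := by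
      rw [h3, hC]
      calc ‖1 - ((s⁻¹ : Aˣ) : A) * (Y ^ (k+1)) * (s : A)‖
          ≤ ‖(1:A)‖ + ‖((s⁻¹ : Aˣ) : A) * (Y ^ (k+1)) * (s : A)‖ := norm_sub_le _ _
        _ ≤ ‖(1:A)‖ + ‖((s⁻¹ : Aˣ) : A)‖ * ‖(s : A)‖ := by
            gcongr
            calc ‖((s⁻¹ : Aˣ) : A) * (Y ^ (k+1)) * (s : A)‖
                ≤ ‖((s⁻¹ : Aˣ) : A) * (Y ^ (k+1))‖ * ‖(s : A)‖ := norm_mul_le _ _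
              _ ≤ ‖((s⁻¹ : Aˣ) : A)‖ * ‖Y ^ (k+1)‖ * ‖(s : A)‖ := by
                  gcongr; exact norm_mul_le _ _
              _ ≤ ‖((s⁻¹ : Aˣ) : A)‖ * 1 * ‖(s : A)‖ := by gcongr
              _ = ‖((s⁻¹ : Aˣ) : A)‖ * ‖(s : A)‖ := by ring
    rw [norm_smul] at h4
    have hnrm : ‖(2:ℂ) * ((k:ℂ)+1)‖ = 2 * ((k:ℝ)+1) := by
      rw [norm_mul]
      have : ((k:ℂ)+1) = (((k:ℝ)+1 : ℝ) : ℂ) := by push_cast; ring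
      rw [this, Complex.norm_real, Real.norm_of_nonneg (by positivity)]
      norm_num
    rwa [hnrm] at h4
  obtain ⟨k, hk⟩ := exists_nat_gt (C / (2 * ‖n‖))
  have h5 := hbound k
  have hklt : C < 2 * ((k:ℝ)+1) * ‖n‖ := by
    rw [div_lt_iff₀ (by positivity)] at hk
    nlinarith [hnpos]
  linarith

lemma exp_smul_idem' (z : ℂ) (p : A) (hp : p * p = p) :
    NormedSpace.exp (z • p) = 1 + (Complex.exp z - 1) • p := by
  have hpow : ∀ n : ℕ, p ^ (n + 1) = p := by
    intro n
    induction n with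
    | zero => simp
    | succ k ih => rw [pow_succ, ih, hp]
  have hsum : Summable fun n : ℕ => ((n.factorial : ℂ))⁻¹ • (z • p) ^ n :=
    NormedSpace.expSeries_summable' (z • p)
  have hsumz : Summable fun n : ℕ => ((n.factorial : ℂ))⁻¹ • z ^ n :=
    NormedSpace.expSeries_summable' (𝕂 := ℂ) z
  have hsumz' : Summable fun n : ℕ => (((n+1).factorial : ℂ))⁻¹ • z ^ (n+1) :=
    (summable_nat_add_iff 1).mpr hsumz
  have hz : Complex.exp z = ∑' n : ℕ, ((n.factorial : ℂ))⁻¹ • z ^ n := by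
    rw [Complex.exp_eq_exp_ℂ, NormedSpace.exp_eq_tsum (𝕂 := ℂ)]
  rw [NormedSpace.exp_eq_tsum (𝕂 := ℂ)]
  show ∑' n : ℕ, ((n.factorial : ℂ))⁻¹ • (z • p) ^ n = _
  rw [Summable.tsum_eq_zero_add hsum]
  have h0 : ((Nat.factorial 0 : ℂ))⁻¹ • (z • p) ^ 0 = 1 := by simp
  rw [h0]
  congr 1
  have hterm : ∀ n : ℕ, (((n+1).factorial : ℂ))⁻¹ • (z • p) ^ (n+1)
      = ((((n+1).factorial : ℂ))⁻¹ • z ^ (n+1)) • p := by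
    intro n
    rw [smul_pow, hpow, smul_smul, smul_eq_mul]
  simp_rw [hterm]
  rw [Summable.tsum_smul_const hsumz']
  congr 1
  have h5 := Summable.tsum_eq_zero_add hsumz
  rw [← hz] at h5
  simp only [pow_zero, Nat.factorial_zero, Nat.cast_one, inv_one, one_smul] at h5
  rw [eq_comm, sub_eq_iff_eq_add, add_comm]
  exact h5

omit [CompleteSpace A] in
lemma posEl_spectrum_pos' {s : A} (hs : IsPositiveEl s) (hsu : IsUnit s) :
    ∀ z ∈ spectrum ℂ s, ∃ t : ℝ, 0 < t ∧ z = (t : ℂ) := by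
  intro z hz
  obtain ⟨t, ht, rfl⟩ := hs.2 hz
  refine ⟨t, ?_, rfl⟩
  rcases lt_or_eq_of_le (Set.mem_Ici.mp ht) with h | h
  · exact h
  · exfalso
    rw [← h] at hz
    rw [Complex.ofReal_zero] at hz
    exact (spectrum.zero_mem_iff ℂ).mp hz hsu

lemma sqrt_unique' {s r : A} (hs : IsPositiveEl s) (hr : IsPositiveEl r)
    (hsu : IsUnit s) (hru : IsUnit r) (h2 : s * s = r * r) : s = r := by
  rcases subsingleton_or_nontrivial A with hA | hA
  · exact Subsingleton.elim s r
  set L : A → (A →L[ℂ] A) := fun w => (ContinuousLinearMap.mul ℂ A) w with hL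
  set R : A → (A →L[ℂ] A) := fun w => ((ContinuousLinearMap.mul ℂ A).flip) w with hR
  have hLapp : ∀ w x : A, L w x = w * x := fun w x => rfl
  have hRapp : ∀ w x : A, R w x = x * w := fun w x => rfl
  set P : A →L[ℂ] A := L s
  set Q : A →L[ℂ] A := R r
  have hcomm : P * Q = Q * P := by
    ext x
    simp only [ContinuousLinearMap.mul_apply, P, Q, hLapp, hRapp, mul_assoc]
  have hspecP : spectrum ℂ P ⊆ spectrum ℂ s := by
    intro z hz
    rw [spectrum.mem_iff] at hz ⊢
    intro hu
    apply hz
    obtain ⟨v, hv⟩ := hu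
    have key : algebraMap ℂ (A →L[ℂ] A) z - P = L (algebraMap ℂ A z - s) := by
      ext x
      simp only [ContinuousLinearMap.sub_apply, P, hLapp, Algebra.algebraMap_eq_smul_one,
        ContinuousLinearMap.smul_apply, ContinuousLinearMap.one_apply, sub_mul,
        smul_mul_assoc, one_mul]
    rw [key, ← hv]
    refine isUnit_iff_exists.mpr ⟨L ((v⁻¹ : Aˣ) : A), ?_, ?_⟩
    · ext x
      simp only [ContinuousLinearMap.mul_apply, hLapp, ContinuousLinearMap.one_apply,
        ← mul_assoc, Units.mul_inv, one_mul]
    · ext x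
      simp only [ContinuousLinearMap.mul_apply, hLapp, ContinuousLinearMap.one_apply,
        ← mul_assoc, Units.inv_mul, one_mul]
  have hspecQ : spectrum ℂ Q ⊆ spectrum ℂ r := by
    intro z hz
    rw [spectrum.mem_iff] at hz ⊢
    intro hu
    apply hz
    obtain ⟨v, hv⟩ := hu
    have key : algebraMap ℂ (A →L[ℂ] A) z - Q = R (algebraMap ℂ A z - r) := by
      ext x
      simp only [ContinuousLinearMap.sub_apply, Q, hRapp, Algebra.algebraMap_eq_smul_one,
        ContinuousLinearMap.smul_apply, ContinuousLinearMap.one_apply, mul_sub,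
        mul_smul_comm, mul_one]
    rw [key, ← hv]
    refine isUnit_iff_exists.mpr ⟨R ((v⁻¹ : Aˣ) : A), ?_, ?_⟩
    · ext x
      simp only [ContinuousLinearMap.mul_apply, hRapp, ContinuousLinearMap.one_apply,
        mul_assoc, Units.inv_mul, mul_one]
    · ext x
      simp only [ContinuousLinearMap.mul_apply, hRapp, ContinuousLinearMap.one_apply,
        mul_assoc, Units.mul_inv, mul_one]
  have hunit : IsUnit (P + Q) := by
    apply isUnit_add_of_commute_spectrum hcomm
    intro x hx y hy
    obtain ⟨tx, htx, rfl⟩ := posEl_spectrum_pos' hs hsu x (hspecP hx)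
    obtain ⟨ty, hty, rfl⟩ := posEl_spectrum_pos' hr hru y (hspecQ hy)
    intro hxy
    rw [← Complex.ofReal_add, Complex.ofReal_eq_zero] at hxy
    linarith
  obtain ⟨U, hU⟩ := hunit
  have happ : (P + Q) (s - r) = 0 := by
    simp only [ContinuousLinearMap.add_apply, P, Q, hLapp, hRapp]
    rw [mul_sub, sub_mul, h2]
    abel
  have hsr : s - r = 0 := by
    have h1 : ((U⁻¹ : (A →L[ℂ] A)ˣ) : A →L[ℂ] A) ((P + Q) (s - r)) = s - r := by
      rw [← ContinuousLinearMap.mul_apply, ← hU, Units.inv_mul]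
      rfl
    rw [happ, map_zero] at h1
    exact h1.symm
  rw [sub_eq_zero] at hsr
  exact hsr

lemma exp_pi_idem (x : A) (hx : x * x = x) :
    NormedSpace.exp ((Complex.I * ((Real.pi : ℝ) : ℂ)) • x) = 1 - (2:ℂ) • x := by
  rw [exp_smul_idem' _ _ hx, mul_comm Complex.I, Complex.exp_pi_mul_I]
  have hc : (-1 - 1 : ℂ) = -2 := by norm_num
  rw [hc, neg_smul, ← sub_eq_add_neg]

lemma herm_idem_eq₁ {e p q : A} (hp2 : p * p = p) (hq2 : q * q = q)
    (hpq : p * q = q) (hqp : q * p = p)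
    (hhp : IsHermitianWt e p) (hhq : IsHermitianWt e q) : p = q := by
  obtain ⟨s₁, hs₁pos, hs₁sq, hs₁⟩ := hhp
  obtain ⟨s₂, hs₂pos, hs₂sq, hs₂⟩ := hhq
  have hseq : s₁ = s₂ := by
    apply Units.ext
    exact sqrt_unique' hs₁pos hs₂pos s₁.isUnit s₂.isUnit
      (by rw [← sq, ← sq, hs₁sq, hs₂sq])
  rw [← hseq] at hs₂
  have hep := hs₁ Real.pi
  have heq := hs₂ Real.pi
  rw [exp_pi_idem p hp2] at hep
  rw [exp_pi_idem q hq2] at heq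
  have hnn : (p - q) * (p - q) = 0 := by
    rw [sub_mul, mul_sub, mul_sub, hp2, hq2, hpq, hqp]
    abel
  have hprod : (1 - (2:ℂ) • p) * (1 - (2:ℂ) • q) = 1 - (2:ℂ) • (p - q) := by
    rw [sub_mul, one_mul, mul_sub, mul_one, smul_mul_smul_comm, hpq, smul_sub]
    have h4 : ((2:ℂ) * 2) • q = (2:ℂ) • q + (2:ℂ) • q := by rw [← add_smul]; norm_num
    rw [h4]
    abel
  have hle : ‖(s₁ : A) * (1 - (2:ℂ) • (p - q)) * ((s₁⁻¹ : Aˣ) : A)‖ ≤ 1 := by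
    rw [← hprod, ← conj_mul_conj']
    calc ‖((s₁ : A) * (1 - (2:ℂ) • p) * ((s₁⁻¹ : Aˣ) : A)) *
            ((s₁ : A) * (1 - (2:ℂ) • q) * ((s₁⁻¹ : Aˣ) : A))‖
        ≤ ‖(s₁ : A) * (1 - (2:ℂ) • p) * ((s₁⁻¹ : Aˣ) : A)‖ *
            ‖(s₁ : A) * (1 - (2:ℂ) • q) * ((s₁⁻¹ : Aˣ) : A)‖ := norm_mul_le _ _
      _ ≤ 1 := by rw [hep, heq]; norm_num
  have := nilp_eq_zero' s₁ (p - q) hnn hle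
  rwa [sub_eq_zero] at this

lemma herm_idem_eq₂ {e p q : A} (hp2 : p * p = p) (hq2 : q * q = q)
    (hpq : p * q = p) (hqp : q * p = q)
    (hhp : IsHermitianWt e p) (hhq : IsHermitianWt e q) : p = q := by
  obtain ⟨s₁, hs₁pos, hs₁sq, hs₁⟩ := hhp
  obtain ⟨s₂, hs₂pos, hs₂sq, hs₂⟩ := hhq
  have hseq : s₁ = s₂ := by
    apply Units.ext
    exact sqrt_unique' hs₁pos hs₂pos s₁.isUnit s₂.isUnit
      (by rw [← sq, ← sq, hs₁sq, hs₂sq])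
  rw [← hseq] at hs₂
  have hep := hs₁ Real.pi
  have heq := hs₂ Real.pi
  rw [exp_pi_idem p hp2] at hep
  rw [exp_pi_idem q hq2] at heq
  have hnn : (p - q) * (p - q) = 0 := by
    rw [sub_mul, mul_sub, mul_sub, hp2, hq2, hpq, hqp]
    abel
  have hprod : (1 - (2:ℂ) • q) * (1 - (2:ℂ) • p) = 1 - (2:ℂ) • (p - q) := by
    rw [sub_mul, one_mul, mul_sub, mul_one, smul_mul_smul_comm, hqp, smul_sub]
    have h4 : ((2:ℂ) * 2) • q = (2:ℂ) • q + (2:ℂ) • q := by rw [← add_smul]; norm_num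
    rw [h4]
    abel
  have hle : ‖(s₁ : A) * (1 - (2:ℂ) • (p - q)) * ((s₁⁻¹ : Aˣ) : A)‖ ≤ 1 := by
    rw [← hprod, ← conj_mul_conj']
    calc ‖((s₁ : A) * (1 - (2:ℂ) • q) * ((s₁⁻¹ : Aˣ) : A)) *
            ((s₁ : A) * (1 - (2:ℂ) • p) * ((s₁⁻¹ : Aˣ) : A))‖
        ≤ ‖(s₁ : A) * (1 - (2:ℂ) • q) * ((s₁⁻¹ : Aˣ) : A)‖ *
            ‖(s₁ : A) * (1 - (2:ℂ) • p) * ((s₁⁻¹ : Aˣ) : A)‖ := norm_mul_le _ _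
      _ ≤ 1 := by rw [hep, heq]; norm_num
  have := nilp_eq_zero' s₁ (p - q) hnn hle
  rwa [sub_eq_zero] at this

end BanachLemmas
end Aux


/-- For `a = b c` as above, `a` is weighted EP with weights `e` and `h` iff
there is an invertible `u` with `c = u b^†_{e,f}` and `b = c^†_{f,h} u`, iff
there are `u₁` left-surjective and `u₂` left-injective with `c = u₂ b^†_{e,f}`
and `b = c^†_{f,h} u₁`. -/
theorem factorization_bc_weighted_EP_iff_invertible_factor
    {A : Type*} [NormedRing A] [NormedAlgebra ℂ A] [CompleteSpace A]
    (e f h a b c : A)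
    (he : IsPositiveEl e ∧ IsUnit e) (hf : IsPositiveEl f ∧ IsUnit f)
    (hh : IsPositiveEl h ∧ IsUnit h)
    (ad : A) (had : IsWMPI e h a ad)
    (habc : a = b * c)
    (hb : ∀ x : A, b * x = 0 → x = 0) (hc : ∀ y : A, ∃ x : A, c * x = y)
    (bd : A) (hbd : IsWMPI e f b bd) (cd : A) (hcd : IsWMPI f h c cd) :
    (IsWEP e h a ↔ ∃ u : Aˣ, c = (u : A) * bd ∧ b = cd * (u : A)) ∧
    (IsWEP e h a ↔
      ∃ u₁ u₂ : A, (∀ y : A, ∃ x : A, u₁ * x = y) ∧ (∀ x : A, u₂ * x = 0 → x = 0) ∧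
        c = u₂ * bd ∧ b = cd * u₁) := by
  have hbdb : bd * b = 1 := by
    have h0 : b * (bd * b - 1) = 0 := by
      rw [mul_sub, mul_one, ← mul_assoc, hbd.1, sub_self]
    have h1 := hb _ h0
    rwa [sub_eq_zero] at h1
  have hccd : c * cd = 1 := by
    obtain ⟨x, hx⟩ := hc 1
    have h0 : c * cd = c * cd * (c * x) := by rw [hx, mul_one]
    rw [h0, ← mul_assoc, hcd.1, hx]
  have hacd : a * cd = b := by rw [habc, mul_assoc, hccd, mul_one]
  have hbda : bd * a = c := by rw [habc, ← mul_assoc, hbdb, one_mul]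
  have P1 : a * (cd * bd) = b * bd := by
    rw [habc, mul_assoc, ← mul_assoc c, hccd, one_mul]
  have P2 : (cd * bd) * a = cd * c := by
    rw [habc, mul_assoc, ← mul_assoc bd, hbdb, one_mul]
  -- (ii) → (i)
  have part2 : (∃ u : Aˣ, c = (u : A) * bd ∧ b = cd * (u : A)) → IsWEP e h a := by
    rintro ⟨u, hcu, hbu⟩
    refine ⟨cd * bd, ⟨?_, ?_, ?_, ?_⟩, ?_⟩
    · rw [P1, mul_assoc, hbda, ← habc]
    · rw [P2, mul_assoc, ← mul_assoc c, hccd, one_mul]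
    · rw [P1]; exact hbd.2.2.1
    · rw [P2]; exact hcd.2.2.2
    · rw [P1, P2, hbu, mul_assoc, ← hcu]
  -- (i) → (ii)
  have part1 : IsWEP e h a → ∃ u : Aˣ, c = (u : A) * bd ∧ b = cd * (u : A) := by
    rintro ⟨d, ⟨hd1, hd2, hdE, hdH⟩, hdc⟩
    have hadb : a * d * b = b := by
      calc a * d * b = a * d * (a * cd) := by rw [hacd]
        _ = a * d * a * cd := by rw [← mul_assoc]
        _ = a * cd := by rw [hd1]
        _ = b := hacd
    have haad : a * (a * d) = a := by rw [hdc, ← mul_assoc, hd1]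
    have hcad : c * a * d = c := by
      rw [← hbda, mul_assoc bd a a, mul_assoc bd (a*a) d, mul_assoc a a d, haad]
    have hcdb : c * d * b = 1 := by
      have h0 : b * (c * d * b - 1) = 0 := by
        rw [mul_sub, mul_one, ← mul_assoc, ← mul_assoc, ← habc, hadb, sub_self]
      have h1 := hb _ h0
      rwa [sub_eq_zero] at h1
    have hcda : c * d * a = c := by
      rw [habc, ← mul_assoc, hcdb, one_mul]
    have pe2 : (b * bd) * (b * bd) = b * bd := by rw [← mul_assoc, hbd.1]
    have qe2 : (a * d) * (a * d) = a * d := by rw [← mul_assoc, hd1]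
    have peqe : (b * bd) * (a * d) = a * d := by
      rw [← mul_assoc, mul_assoc b bd a, hbda, ← habc]
    have qepe : (a * d) * (b * bd) = b * bd := by rw [← mul_assoc, hadb]
    have hEeq : b * bd = a * d := herm_idem_eq₁ pe2 qe2 peqe qepe hbd.2.2.1 hdE
    have ph2 : (cd * c) * (cd * c) = cd * c := by
      rw [← mul_assoc, mul_assoc cd c cd, hccd, mul_one]
    have qh2 : (d * a) * (d * a) = d * a := by rw [← mul_assoc, hd2]
    have phqh : (cd * c) * (d * a) = cd * c := by
      rw [mul_assoc cd c (d * a), ← mul_assoc c d a, hcda]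
    have qhph : (d * a) * (cd * c) = d * a := by
      rw [mul_assoc d a (cd * c), ← mul_assoc a cd c, hacd, ← habc]
    have hHeq : cd * c = d * a := herm_idem_eq₂ ph2 qh2 phqh qhph hcd.2.2.2 hdH
    have hdab : d * a * b = b := by rw [← hdc, hadb]
    have huv : (c * b) * (bd * cd) = 1 := by
      rw [mul_assoc, ← mul_assoc b bd cd, hEeq, ← mul_assoc c (a * d) cd,
        ← mul_assoc c a d, hcad, hccd]
    have hvu : (bd * cd) * (c * b) = 1 := by
      rw [mul_assoc, ← mul_assoc cd c b, hHeq, hdab, hbdb]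
    refine ⟨⟨c * b, bd * cd, huv, hvu⟩, ?_, ?_⟩
    · exact (by rw [mul_assoc c b bd, hEeq, ← mul_assoc c a d, hcad] :
        (c * b) * bd = c).symm
    · exact (by rw [← mul_assoc cd c b, hHeq, hdab] : cd * (c * b) = b).symm
  -- (iii) → (ii)
  have part3 : (∃ u₁ u₂ : A, (∀ y : A, ∃ x : A, u₁ * x = y) ∧
      (∀ x : A, u₂ * x = 0 → x = 0) ∧ c = u₂ * bd ∧ b = cd * u₁) →
      ∃ u : Aˣ, c = (u : A) * bd ∧ b = cd * (u : A) := by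
    rintro ⟨u₁, u₂, hsurj, hinj, hcu2, hbu1⟩
    have hu2m : u₂ * (bd * cd) = 1 := by
      rw [← mul_assoc, ← hcu2, hccd]
    have hmu2 : (bd * cd) * u₂ = 1 := by
      have h0 : u₂ * ((bd * cd) * u₂ - 1) = 0 := by
        rw [mul_sub, mul_one, ← mul_assoc, hu2m, one_mul, sub_self]
      have h1 := hinj _ h0
      rwa [sub_eq_zero] at h1
    have hmu1 : (bd * cd) * u₁ = 1 := by
      rw [mul_assoc, ← hbu1, hbdb]
    have hu1m : u₁ * (bd * cd) = 1 := by
      have h0 : ∀ y : A, (u₁ * (bd * cd)) * y = y := by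
        intro y
        obtain ⟨x, hx⟩ := hsurj y
        rw [← hx, ← mul_assoc, mul_assoc u₁ (bd * cd) u₁, hmu1, mul_one]
      have h1 := h0 1
      rwa [mul_one] at h1
    have hu12 : u₁ = u₂ := by
      calc u₁ = u₁ * ((bd * cd) * u₂) := by rw [hmu2, mul_one]
        _ = (u₁ * (bd * cd)) * u₂ := by rw [← mul_assoc]
        _ = u₂ := by rw [hu1m, one_mul]
    refine ⟨⟨u₂, bd * cd, hu2m, hmu2⟩, hcu2, ?_⟩
    show b = cd * u₂
    rw [← hu12]; exact hbu1
  constructor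
  · exact ⟨part1, part2⟩
  · constructor
    · intro hwep
      obtain ⟨u, h1', h2'⟩ := part1 hwep
      refine ⟨(u : A), (u : A), ?_, ?_, h1', h2'⟩
      · intro y
        exact ⟨((u⁻¹ : Aˣ) : A) * y, by rw [← mul_assoc, u.mul_inv, one_mul]⟩
      · intro x hx
        have h3 := congrArg (fun z => ((u⁻¹ : Aˣ) : A) * z) hx
        simpa [← mul_assoc, u.inv_mul] using h3
    · intro hiii
      exact part2 (part3 hiii)
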